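/- Well-posedness and a priori bounds for the left backward-shock Cauchy problem (Section 3.1): Let f, θ, T be as in the context, let B > θ, R ∈ (0, T·f'(B)), and t₀ := R/f'(B) ∈ (0,T). Then there exists a unique C¹ function y : [t₀, T] → ℝ solving the left backward-shock Cauchy problem with data (R,B); moreover every such solution y satisfies: y(t) + R > t·f'(B̄) for all t ∈ [t₀,T] (so that (f')⁻¹((y(t)+R)/t) > B̄ and the right-hand side of the ODE is well defined); T·f'(B̄) < y(t) ≤ 0 for all t ∈ [t₀,T], with y(t) < 0 for t ∈ (t₀,T]; y'(t) ≤ 0 for all t; t ↦ y'(t) is strictly decreasing on [t₀,T]; and y(T) ∈ (T·f'(B̄), 0). -/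

import Mathlib

noncomputable section

open Set Filter Topology

/-- The Rankine–Hugoniot speed `λ(u,v) = (f(v) - f(u)) / (v - u)`. -/
def lamF (f : ℝ → ℝ) (u v : ℝ) : ℝ := (f v - f u) / (v - u)

/-- `y` solves the left backward-shock Cauchy problem with data `(R, B)` on
`[R / f'(B), T]`:  `y(R/f'(B)) = 0` and `y'(t) = λ((f')⁻¹((y(t)+R)/t), B̄)`.
Here `finv` denotes the inverse of `deriv f`. -/
def LeftShockSol (f finv : ℝ → ℝ) (T B Bbar R : ℝ) (y : ℝ → ℝ) : Prop :=
  y (R / deriv f B) = 0 ∧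
  ∀ t ∈ Icc (R / deriv f B) T,
    HasDerivWithinAt y (lamF f (finv ((y t + R) / t)) Bbar) (Icc (R / deriv f B) T) t

/-- `x` solves the right backward-shock Cauchy problem with data `(L, A)` on
`[L / f'(A), T]`:  `x(L/f'(A)) = 0` and `x'(t) = λ((f')⁻¹((x(t)+L)/t), Ā)`.
Here `finv` denotes the inverse of `deriv f`. -/
def RightShockSol (f finv : ℝ → ℝ) (T A Abar L : ℝ) (x : ℝ → ℝ) : Prop :=
  x (L / deriv f A) = 0 ∧
  ∀ t ∈ Icc (L / deriv f A) T,
    HasDerivWithinAt x (lamF f (finv ((x t + L) / t)) Abar) (Icc (L / deriv f A) T) t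

set_option maxHeartbeats 4000000 in
/-- **Section 3.1**: well-posedness and a priori bounds for the left backward-shock
Cauchy problem. -/
theorem left_backward_shock_wellposed
    (f : ℝ → ℝ) (a : ℝ) (ha : 0 < a) (hf : ContDiff ℝ 2 f)
    (hf2 : ∀ u : ℝ, a ≤ deriv (deriv f) u)
    (θ : ℝ) (hθ : deriv f θ = 0)
    (finv : ℝ → ℝ) (hfinv1 : ∀ u : ℝ, finv (deriv f u) = u)
    (hfinv2 : ∀ p : ℝ, deriv f (finv p) = p)
    (T : ℝ) (hT : 0 < T)
    (B Bbar : ℝ) (hB : θ < B) (hBbar1 : Bbar ≤ θ) (hBbar2 : f Bbar = f B)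
    (R : ℝ) (hR : R ∈ Ioo (0:ℝ) (T * deriv f B)) :
    (0 < R / deriv f B ∧ R / deriv f B < T) ∧
    (∃ y : ℝ → ℝ, LeftShockSol f finv T B Bbar R y ∧
        ∀ y' : ℝ → ℝ, LeftShockSol f finv T B Bbar R y' →
          EqOn y' y (Icc (R / deriv f B) T)) ∧
    (∀ y : ℝ → ℝ, LeftShockSol f finv T B Bbar R y →
        (∀ t ∈ Icc (R / deriv f B) T, t * deriv f Bbar < y t + R) ∧
        (∀ t ∈ Icc (R / deriv f B) T, Bbar < finv ((y t + R) / t)) ∧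
        (∀ t ∈ Icc (R / deriv f B) T, T * deriv f Bbar < y t ∧ y t ≤ 0) ∧
        (∀ t ∈ Ioc (R / deriv f B) T, y t < 0) ∧
        (∀ t ∈ Icc (R / deriv f B) T, lamF f (finv ((y t + R) / t)) Bbar ≤ 0) ∧
        StrictAntiOn (fun t => lamF f (finv ((y t + R) / t)) Bbar)
          (Icc (R / deriv f B) T) ∧
        y T ∈ Ioo (T * deriv f Bbar) 0) := by
  obtain ⟨hR0, hRT⟩ := hR
  -- ## Basic differentiability facts
  have hd1 : Differentiable ℝ f := hf.differentiable (by norm_num)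
  have hcd1 : ContDiff ℝ 1 (deriv f) := by
    have h2 : ContDiff ℝ (1 + 1 : ℕ) f := by exact_mod_cast hf
    exact ((contDiff_succ_iff_deriv).mp (by exact_mod_cast h2)).2.2
  have hd2 : Differentiable ℝ (deriv f) := hcd1.differentiable (by norm_num)
  have hD1 : ∀ x, HasDerivAt f (deriv f x) x := fun x => (hd1 x).hasDerivAt
  have hD2 : ∀ x, HasDerivAt (deriv f) (deriv (deriv f) x) x := fun x => (hd2 x).hasDerivAt
  have hpos2 : ∀ x, 0 < deriv (deriv f) x := fun x => lt_of_lt_of_le ha (hf2 x)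
  have hmono : StrictMono (deriv f) := strictMono_of_deriv_pos hpos2
  have slope_mem : ∀ u w : ℝ, u < w → ∃ ξ ∈ Ioo u w, deriv f ξ = (f w - f u) / (w - u) :=
    fun u w h => exists_hasDerivAt_eq_slope f (deriv f) h hd1.continuous.continuousOn
      (fun x _ => hD1 x)
  have slope_lt : ∀ u w : ℝ, u < w →
      deriv f u < (f w - f u) / (w - u) ∧ (f w - f u) / (w - u) < deriv f w := by
    intro u w h
    obtain ⟨ξ, hξ, he⟩ := slope_mem u w h
    exact ⟨he ▸ hmono hξ.1, he ▸ hmono hξ.2⟩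
  have slope2 : ∀ u w : ℝ, u < w → a * (w - u) ≤ deriv f w - deriv f u := by
    intro u w h
    obtain ⟨ξ, hξ, he⟩ := exists_hasDerivAt_eq_slope (deriv f) (deriv (deriv f)) h
      hd2.continuous.continuousOn (fun x _ => hD2 x)
    have h1 := hf2 ξ
    rw [he] at h1
    have hw : 0 < w - u := sub_pos.2 h
    rw [le_div_iff₀ hw] at h1
    linarith
  -- ## positions of `θ`, `B`, `Bbar`
  have hfB : 0 < deriv f B := hθ ▸ hmono hB
  have ht₀pos : 0 < R / deriv f B := div_pos hR0 hfB
  have ht₀T : R / deriv f B < T := (div_lt_iff₀ hfB).2 (by linarith)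
  have hθB : f θ < f B := by
    have h1 := (slope_lt θ B hB).1
    rw [hθ] at h1
    rcases div_pos_iff.mp h1 with ⟨h2, _⟩ | ⟨_, h3⟩
    · linarith
    · linarith [sub_pos.2 hB]
  have hBbarθ : Bbar < θ := by
    rcases lt_or_eq_of_le hBbar1 with h | h
    · exact h
    · rw [h] at hBbar2; exact absurd hBbar2 (ne_of_lt hθB)
  have hBbarB : Bbar < B := hBbarθ.trans hB
  have hfBbar : deriv f Bbar < 0 := hθ ▸ hmono hBbarθ
  -- ## facts about `finv`
  have hfinvmono : StrictMono finv := by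
    intro p q h
    have h2 : deriv f (finv p) < deriv f (finv q) := by rw [hfinv2, hfinv2]; exact h
    exact hmono.lt_iff_lt.mp h2
  have hfinvsurj : Function.Surjective finv := fun u => ⟨deriv f u, hfinv1 u⟩
  have hfinvcont : Continuous finv := by
    have h : ⇑(StrictMono.orderIsoOfSurjective finv hfinvmono hfinvsurj) = finv :=
      StrictMono.coe_orderIsoOfSurjective _ _ _
    rw [← h]
    exact OrderIso.continuous _
  have hfinvD : ∀ p, HasDerivAt finv (deriv (deriv f) (finv p))⁻¹ p := fun p =>
    HasDerivAt.of_local_left_inverse hfinvcont.continuousAt (hD2 (finv p))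
      (ne_of_gt (hpos2 _)) (Eventually.of_forall hfinv2)
  have hfinvBbar : finv (deriv f Bbar) = Bbar := hfinv1 Bbar
  -- ## the function `Φ`
  set Φ : ℝ → ℝ := fun v => (v - Bbar) * deriv f v - (f v - f Bbar) with hΦdef
  have hΦD : ∀ v, HasDerivAt Φ ((v - Bbar) * deriv (deriv f) v) v := by
    intro v
    have h1 : HasDerivAt (fun v : ℝ => (v - Bbar) * deriv f v)
        (1 * deriv f v + (v - Bbar) * deriv (deriv f) v) v :=
      (((hasDerivAt_id v).sub_const Bbar).mul (hD2 v))
    have h2 : HasDerivAt (fun v : ℝ => f v - f Bbar) (deriv f v) v := (hD1 v).sub_const _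
    have h3 := h1.sub h2
    refine h3.congr_deriv (Eq.symm ?_)
    ring
  have hΦdiff : Differentiable ℝ Φ := fun v => (hΦD v).differentiableAt
  have hΦmono : StrictMonoOn Φ (Ici Bbar) := by
    apply strictMonoOn_of_deriv_pos (convex_Ici _) hΦdiff.continuous.continuousOn
    intro x hx
    rw [interior_Ici] at hx
    rw [(hΦD x).deriv]
    exact mul_pos (sub_pos.2 hx) (hpos2 x)
  have hΦBbar : Φ Bbar = 0 := by simp [hΦdef]
  have hΦB : Φ B = (B - Bbar) * deriv f B := by simp [hΦdef, hBbar2]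
  have hΦgrow : ∀ v, Bbar < v → a * (v - Bbar) ^ 2 / 4 ≤ Φ v := by
    intro v hv
    set m := (Bbar + v) / 2 with hm
    have hm1 : Bbar < m := by rw [hm]; linarith
    have hm2 : m < v := by rw [hm]; linarith
    obtain ⟨ξ1, hξ1, he1⟩ := slope_mem m v hm2
    obtain ⟨ξ2, hξ2, he2⟩ := slope_mem Bbar m hm1
    have k1 : f v - f m = (v - m) * deriv f ξ1 := by
      rw [he1]; field_simp [sub_ne_zero.mpr hm2.ne']
    have k2 : f m - f Bbar = (m - Bbar) * deriv f ξ2 := by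
      rw [he2]; field_simp [sub_ne_zero.mpr hm1.ne']
    have o1 : deriv f ξ1 ≤ deriv f v := (hmono hξ1.2).le
    have o2 : deriv f ξ2 ≤ deriv f m := (hmono hξ2.2).le
    have o3 := slope2 m v hm2
    have hsub1 : (0:ℝ) ≤ v - m := by linarith
    have hsub2 : (0:ℝ) ≤ m - Bbar := by linarith
    have b1 : f v - f m ≤ (v - m) * deriv f v := by
      rw [k1]; exact mul_le_mul_of_nonneg_left o1 hsub1
    have b2 : f m - f Bbar ≤ (m - Bbar) * deriv f m := by
      rw [k2]; exact mul_le_mul_of_nonneg_left o2 hsub2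
    have step1 : f v - f Bbar ≤ (v - m) * deriv f v + (m - Bbar) * deriv f m := by
      linarith
    have hΦv : Φ v = (v - Bbar) * deriv f v - (f v - f Bbar) := rfl
    have step2 : (m - Bbar) * (deriv f v - deriv f m) ≤ Φ v := by
      rw [hΦv]; nlinarith [step1]
    have step3 : (m - Bbar) * (a * (v - m)) ≤ (m - Bbar) * (deriv f v - deriv f m) :=
      mul_le_mul_of_nonneg_left o3 hsub2
    have hq : (m - Bbar) * (a * (v - m)) = a * (v - Bbar) ^ 2 / 4 := by rw [hm]; ring
    linarith
  -- ## the function `ψ`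
  set ψ : ℝ → ℝ := fun p => Φ (finv p) with hψdef
  have hψD : ∀ p, HasDerivAt ψ (finv p - Bbar) p := by
    intro p
    have h1 := (hΦD (finv p)).comp p (hfinvD p)
    refine h1.congr_deriv (Eq.symm ?_)
    field_simp [ne_of_gt (hpos2 (finv p))]
  have hψcont : Continuous ψ := hΦdiff.continuous.comp hfinvcont
  have hψ0 : ψ (deriv f Bbar) = 0 := by
    show Φ (finv (deriv f Bbar)) = 0
    rw [hfinvBbar, hΦBbar]
  have hψB : ψ (deriv f B) = (B - Bbar) * deriv f B := by
    show Φ (finv (deriv f B)) = _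
    rw [hfinv1, hΦB]
  have hψmono : StrictMonoOn ψ (Ici (deriv f Bbar)) := by
    intro p hp q hq hpq
    have h1 : Bbar ≤ finv p := by
      rw [← hfinvBbar]; exact hfinvmono.le_iff_le.mpr hp
    have h2 : Bbar ≤ finv q := by
      rw [← hfinvBbar]; exact hfinvmono.le_iff_le.mpr hq
    exact hΦmono h1 h2 (hfinvmono hpq)
  have hψsurj : ∀ s : ℝ, 0 ≤ s → ∃ p, deriv f Bbar ≤ p ∧ ψ p = s := by
    intro s hs
    obtain ⟨v₀, hv₀B, hΦv₀⟩ : ∃ v₀, Bbar < v₀ ∧ s ≤ Φ v₀ := by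
      have hsqnn := Real.sqrt_nonneg (s / a)
      have hsq : Real.sqrt (s / a) ^ 2 = s / a := Real.sq_sqrt (by positivity)
      have h3 : a * (s / a) = s := by field_simp
      have hv₀B : Bbar < Bbar + 2 * Real.sqrt (s / a) + 1 := by nlinarith
      refine ⟨Bbar + 2 * Real.sqrt (s / a) + 1, hv₀B, ?_⟩
      have h1 := hΦgrow _ hv₀B
      nlinarith [h1]
    have hle : deriv f Bbar ≤ deriv f v₀ := (hmono hv₀B).le
    have hmem : s ∈ Icc (ψ (deriv f Bbar)) (ψ (deriv f v₀)) := by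
      rw [hψ0]
      refine ⟨hs, ?_⟩
      show s ≤ Φ (finv (deriv f v₀))
      rw [hfinv1]; exact hΦv₀
    obtain ⟨p, hp, hps⟩ := intermediate_value_Icc hle hψcont.continuousOn hmem
    exact ⟨p, hp.1, hps⟩
  -- ## the extension `Ψ` and its inverse `Q`
  set Ψ : ℝ → ℝ := fun p => if deriv f Bbar ≤ p then ψ p else p - deriv f Bbar with hΨdef
  have hΨψ : ∀ p, deriv f Bbar ≤ p → Ψ p = ψ p := fun p hp => if_pos hp
  have hΨmono : StrictMono Ψ := by
    intro p q hpq
    by_cases hp : deriv f Bbar ≤ p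
    · rw [hΨψ p hp, hΨψ q (hp.trans hpq.le)]
      exact hψmono hp (hp.trans hpq.le) hpq
    · push_neg at hp
      have hΨp : Ψ p = p - deriv f Bbar := if_neg (not_le.2 hp)
      rw [hΨp]
      by_cases hq : deriv f Bbar ≤ q
      · rw [hΨψ q hq]
        have h2 : 0 ≤ ψ q := by
          rcases eq_or_lt_of_le hq with h | h
          · rw [← h, hψ0]
          · rw [← hψ0]; exact (hψmono (mem_Ici.mpr le_rfl) hq h).le
        linarith
      · push_neg at hq
        have hΨq : Ψ q = q - deriv f Bbar := if_neg (not_le.2 hq)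
        rw [hΨq]
        linarith
  have hΨsurj : Function.Surjective Ψ := by
    intro s
    rcases le_or_gt 0 s with hs | hs
    · obtain ⟨p, hp1, hp2⟩ := hψsurj s hs
      exact ⟨p, by rw [hΨψ p hp1]; exact hp2⟩
    · refine ⟨s + deriv f Bbar, ?_⟩
      have h1 : Ψ (s + deriv f Bbar) = s + deriv f Bbar - deriv f Bbar :=
        if_neg (by linarith)
      rw [h1]; ring
  obtain ⟨Q, hQcont, hQΨ, hΨQ⟩ :
      ∃ Q : ℝ → ℝ, Continuous Q ∧ (∀ p, Q (Ψ p) = p) ∧ (∀ s, Ψ (Q s) = s) := by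
    refine ⟨fun s => (StrictMono.orderIsoOfSurjective Ψ hΨmono hΨsurj).symm s,
      ((StrictMono.orderIsoOfSurjective Ψ hΨmono hΨsurj).symm).continuous,
      fun p => ?_, fun s => ?_⟩
    · exact StrictMono.orderIsoOfSurjective_symm_apply_self Ψ hΨmono hΨsurj p
    · exact StrictMono.orderIsoOfSurjective_self_symm_apply Ψ hΨmono hΨsurj s
  have hQpos : ∀ s, 0 < s → deriv f Bbar < Q s := by
    intro s hs
    have h0 : Ψ (deriv f Bbar) = 0 := by rw [hΨψ _ le_rfl]; exact hψ0
    have h1 : Ψ (deriv f Bbar) < Ψ (Q s) := by rw [hΨQ, h0]; exact hs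
    exact hΨmono.lt_iff_lt.mp h1
  have hψQ : ∀ s, 0 < s → ψ (Q s) = s := fun s hs => by
    rw [← hΨψ _ (hQpos s hs).le, hΨQ]
  have hQψ : ∀ p, deriv f Bbar ≤ p → Q (ψ p) = p := fun p hp => by
    rw [← hΨψ _ hp, hQΨ]
  have hQD : ∀ s, 0 < s → HasDerivAt Q (finv (Q s) - Bbar)⁻¹ s := by
    intro s hs
    have hQs := hQpos s hs
    have hΨD : HasDerivAt Ψ (finv (Q s) - Bbar) (Q s) := by
      apply (hψD (Q s)).congr_of_eventuallyEq
      filter_upwards [Ioi_mem_nhds hQs] with p hp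
      exact hΨψ p (le_of_lt hp)
    have hne : finv (Q s) - Bbar ≠ 0 := by
      have h2 : Bbar < finv (Q s) := by rw [← hfinvBbar]; exact hfinvmono hQs
      exact ne_of_gt (sub_pos.2 h2)
    exact HasDerivAt.of_local_left_inverse hQcont.continuousAt hΨD hne
      (Eventually.of_forall hΨQ)
  -- ## the conserved quantity
  obtain ⟨c, hc⟩ : ∃ c : ℝ, c = R * (B - Bbar) := ⟨_, rfl⟩
  have hcpos : 0 < c := by rw [hc]; exact mul_pos hR0 (sub_pos.2 hBbarB)
  have hct₀ : c / (R / deriv f B) = (B - Bbar) * deriv f B := by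
    rw [hc]; field_simp
  have hIcc : ∀ t ∈ Icc (R / deriv f B) T, (0:ℝ) < t :=
    fun t ht => lt_of_lt_of_le ht₀pos ht.1
  have hlamgen : ∀ v : ℝ, lamF f v Bbar = (f v - f Bbar) / (v - Bbar) := by
    intro v
    show (f Bbar - f v) / (Bbar - v) = _
    rw [show f Bbar - f v = -(f v - f Bbar) by ring,
      show Bbar - v = -(v - Bbar) by ring, neg_div_neg_eq]
  have hψval : ∀ q : ℝ, ψ q = (finv q - Bbar) * q - (f (finv q) - f Bbar) := by
    intro q
    show Φ (finv q) = _
    simp only [hΦdef]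
    rw [hfinv2]
  -- ## the conserved quantity along any solution
  have key : ∀ y : ℝ → ℝ, LeftShockSol f finv T B Bbar R y →
      ∀ t ∈ Icc (R / deriv f B) T,
        deriv f Bbar < (y t + R) / t ∧ ψ ((y t + R) / t) = c / t := by
    intro y hy
    obtain ⟨hy0, hyD⟩ := hy
    have hycont : ContinuousOn y (Icc (R / deriv f B) T) :=
      fun t ht => (hyD t ht).continuousWithinAt
    have hpt₀ : (y (R / deriv f B) + R) / (R / deriv f B) = deriv f B := by
      rw [hy0, zero_add]
      field_simp
    have hED : ∀ t ∈ Icc (R / deriv f B) T,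
        HasDerivWithinAt (fun u => u * ψ ((y u + R) / u)) 0 (Icc (R / deriv f B) T) t := by
      intro t ht
      have ht0 : t ≠ 0 := (hIcc t ht).ne'
      have h1 : HasDerivWithinAt (fun u => y u + R)
          (lamF f (finv ((y t + R) / t)) Bbar) (Icc (R / deriv f B) T) t :=
        (hyD t ht).add_const R
      have h2 : HasDerivWithinAt (fun u : ℝ => u⁻¹) (-(t ^ 2)⁻¹) (Icc (R / deriv f B) T) t :=
        (hasDerivAt_inv ht0).hasDerivWithinAt
      have h3 : HasDerivWithinAt (fun u => (y u + R) / u)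
          (lamF f (finv ((y t + R) / t)) Bbar * t⁻¹ + (y t + R) * -(t ^ 2)⁻¹)
          (Icc (R / deriv f B) T) t := by
        have h4 := h1.mul h2
        have he : (fun u => (y u + R) / u) = fun u => (y u + R) * u⁻¹ := by
          funext u; rw [div_eq_mul_inv]
        rw [he]
        exact h4
      have h5 : HasDerivWithinAt (fun u => ψ ((y u + R) / u))
          ((finv ((y t + R) / t) - Bbar) *
            (lamF f (finv ((y t + R) / t)) Bbar * t⁻¹ + (y t + R) * -(t ^ 2)⁻¹))
          (Icc (R / deriv f B) T) t :=
        (hψD ((y t + R) / t)).comp_hasDerivWithinAt_of_eq t h3 rfl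
      have h6 := (hasDerivWithinAt_id t (Icc (R / deriv f B) T)).mul h5
      refine h6.congr_deriv (Eq.symm ?_)
      have hvkey : (finv ((y t + R) / t) - Bbar) * lamF f (finv ((y t + R) / t)) Bbar
          = f (finv ((y t + R) / t)) - f Bbar := by
        rcases eq_or_ne (finv ((y t + R) / t)) Bbar with h | h
        · rw [h]; simp [lamF]
        · rw [hlamgen]
          field_simp [sub_ne_zero.mpr h]
      rw [id_eq, hψval]
      field_simp
      linear_combination (-t : ℝ) * hvkey
    have hEconst : ∀ t ∈ Icc (R / deriv f B) T, t * ψ ((y t + R) / t) = c := by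
      have hcE : ContinuousOn (fun u => u * ψ ((y u + R) / u)) (Icc (R / deriv f B) T) :=
        fun t ht => (hED t ht).continuousWithinAt
      have hconst := constant_of_has_deriv_right_zero hcE (fun x hx => by
        have hmem' : Icc (R / deriv f B) T ∈ 𝓝[Ici x] x := by
          rw [mem_nhdsWithin]
          exact ⟨Iio T, isOpen_Iio, hx.2, fun z hz => ⟨hx.1.trans hz.2, hz.1.le⟩⟩
        exact (hED x (Ico_subset_Icc_self hx)).mono_of_mem_nhdsWithin hmem')
      intro t ht
      rw [hconst t ht, hpt₀, hψB]
      rw [hc]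
      field_simp [hfB.ne']
    have hψc : ∀ t ∈ Icc (R / deriv f B) T, ψ ((y t + R) / t) = c / t := by
      intro t ht
      rw [eq_div_iff (hIcc t ht).ne', mul_comm]
      exact hEconst t ht
    have hvt₀ : finv ((y (R / deriv f B) + R) / (R / deriv f B)) = B := by
      rw [hpt₀, hfinv1]
    have hvne : ∀ t ∈ Icc (R / deriv f B) T, finv ((y t + R) / t) ≠ Bbar := by
      intro t ht hcontra
      have h1 : ψ ((y t + R) / t) = 0 := by
        show Φ _ = 0
        rw [hcontra, hΦBbar]
      have h2 := hψc t ht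
      rw [h1] at h2
      have h3 : 0 < c / t := div_pos hcpos (hIcc t ht)
      rw [← h2] at h3
      exact lt_irrefl 0 h3
    have hvcont : ContinuousOn (fun u => finv ((y u + R) / u)) (Icc (R / deriv f B) T) :=
      hfinvcont.comp_continuousOn
        ((hycont.add continuousOn_const).div continuousOn_id
          (fun t ht => (hIcc t ht).ne'))
    have hvgt : ∀ t ∈ Icc (R / deriv f B) T, Bbar < finv ((y t + R) / t) := by
      intro t ht
      by_contra hcon
      push_neg at hcon
      have hlt : finv ((y t + R) / t) < Bbar := lt_of_le_of_ne hcon (hvne t ht)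
      have hsub : Icc (R / deriv f B) t ⊆ Icc (R / deriv f B) T := Icc_subset_Icc le_rfl ht.2
      have hBmem : Bbar ∈
          Icc (finv ((y t + R) / t)) (finv ((y (R / deriv f B) + R) / (R / deriv f B))) := by
        rw [hvt₀]
        exact ⟨hlt.le, hBbarB.le⟩
      obtain ⟨t₂, ht₂, he⟩ := intermediate_value_Icc' ht.1 (hvcont.mono hsub) hBmem
      exact hvne t₂ (hsub ht₂) he
    intro t ht
    refine ⟨?_, hψc t ht⟩
    have h2 := hmono (hvgt t ht)
    rwa [hfinv2] at h2
  -- ## a priori properties of any solution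
  have props : ∀ y : ℝ → ℝ, LeftShockSol f finv T B Bbar R y →
      (∀ t ∈ Icc (R / deriv f B) T, t * deriv f Bbar < y t + R) ∧
      (∀ t ∈ Icc (R / deriv f B) T, Bbar < finv ((y t + R) / t)) ∧
      (∀ t ∈ Icc (R / deriv f B) T, T * deriv f Bbar < y t ∧ y t ≤ 0) ∧
      (∀ t ∈ Ioc (R / deriv f B) T, y t < 0) ∧
      (∀ t ∈ Icc (R / deriv f B) T, lamF f (finv ((y t + R) / t)) Bbar ≤ 0) ∧
      StrictAntiOn (fun t => lamF f (finv ((y t + R) / t)) Bbar)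
        (Icc (R / deriv f B) T) ∧
      y T ∈ Ioo (T * deriv f Bbar) 0 := by
    intro y hy
    have hkey := key y hy
    obtain ⟨hy0, hyD⟩ := hy
    have hycont : ContinuousOn y (Icc (R / deriv f B) T) :=
      fun t ht => (hyD t ht).continuousWithinAt
    have ht₀mem : (R / deriv f B) ∈ Icc (R / deriv f B) T := ⟨le_rfl, ht₀T.le⟩
    have hvgt : ∀ t ∈ Icc (R / deriv f B) T, Bbar < finv ((y t + R) / t) := by
      intro t ht
      have h1 := hfinvmono (hkey t ht).1
      rwa [hfinvBbar] at h1
    have hc1 : ∀ t ∈ Icc (R / deriv f B) T, t * deriv f Bbar < y t + R := by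
      intro t ht
      have h2 := mul_lt_mul_of_pos_left (hkey t ht).1 (hIcc t ht)
      rwa [mul_comm t ((y t + R) / t), div_mul_cancel₀ _ (hIcc t ht).ne'] at h2
    have hpanti : ∀ t₁ ∈ Icc (R / deriv f B) T, ∀ t₂ ∈ Icc (R / deriv f B) T, t₁ < t₂ →
        (y t₂ + R) / t₂ < (y t₁ + R) / t₁ := by
      intro t₁ h₁ t₂ h₂ h12
      have hlt : c / t₂ < c / t₁ := div_lt_div_of_pos_left hcpos (hIcc t₁ h₁) h12
      rw [← (hkey t₁ h₁).2, ← (hkey t₂ h₂).2] at hlt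
      exact (hψmono.lt_iff_lt (mem_Ici.mpr (hkey t₂ h₂).1.le)
        (mem_Ici.mpr (hkey t₁ h₁).1.le)).mp hlt
    have hvanti : ∀ t₁ ∈ Icc (R / deriv f B) T, ∀ t₂ ∈ Icc (R / deriv f B) T, t₁ < t₂ →
        finv ((y t₂ + R) / t₂) < finv ((y t₁ + R) / t₁) :=
      fun t₁ h₁ t₂ h₂ h12 => hfinvmono (hpanti t₁ h₁ t₂ h₂ h12)
    have hpt₀ : (y (R / deriv f B) + R) / (R / deriv f B) = deriv f B := by
      rw [hy0, zero_add]
      field_simp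
    have hvt₀ : finv ((y (R / deriv f B) + R) / (R / deriv f B)) = B := by
      rw [hpt₀, hfinv1]
    have hL2 : ∀ v₁ v₂ : ℝ, Bbar < v₁ → v₁ < v₂ →
        (f v₁ - f Bbar) / (v₁ - Bbar) < (f v₂ - f Bbar) / (v₂ - Bbar) := by
      intro v₁ v₂ h1 h2
      obtain ⟨ξa, hξa, hea⟩ := slope_mem Bbar v₁ h1
      obtain ⟨ξb, hξb, heb⟩ := slope_mem v₁ v₂ h2
      have hfa : f v₁ - f Bbar = (v₁ - Bbar) * deriv f ξa := by
        rw [hea]; field_simp [sub_ne_zero.mpr h1.ne']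
      have hfb : f v₂ - f v₁ = (v₂ - v₁) * deriv f ξb := by
        rw [heb]; field_simp [sub_ne_zero.mpr h2.ne']
      have hab : deriv f ξa < deriv f ξb := hmono (hξa.2.trans hξb.1)
      rw [div_lt_div_iff₀ (by linarith [h1]) (by linarith [h1, h2])]
      nlinarith [mul_pos (mul_pos (sub_pos.2 h1) (sub_pos.2 h2)) (sub_pos.2 hab)]
    have hL1 : ∀ v : ℝ, Bbar < v → deriv f Bbar < (f v - f Bbar) / (v - Bbar) :=
      fun v h => (slope_lt Bbar v h).1
    have hlamt₀ : lamF f (finv ((y (R / deriv f B) + R) / (R / deriv f B))) Bbar = 0 := by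
      rw [hvt₀, hlamgen, ← hBbar2, sub_self, zero_div]
    have hlamanti : StrictAntiOn (fun t => lamF f (finv ((y t + R) / t)) Bbar)
        (Icc (R / deriv f B) T) := by
      intro t₁ h₁ t₂ h₂ h12
      simp only
      rw [hlamgen, hlamgen]
      exact hL2 _ _ (hvgt t₂ h₂) (hvanti t₁ h₁ t₂ h₂ h12)
    have hlamle : ∀ t ∈ Icc (R / deriv f B) T, lamF f (finv ((y t + R) / t)) Bbar ≤ 0 := by
      intro t ht
      rcases eq_or_lt_of_le ht.1 with h | h
      · rw [← h]
        exact le_of_eq hlamt₀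
      · have h1 := hlamanti ht₀mem ht h
        simp only at h1
        rw [hlamt₀] at h1
        exact h1.le
    have hyanti : StrictAntiOn y (Icc (R / deriv f B) T) := by
      apply strictAntiOn_of_deriv_neg (convex_Icc _ _) hycont
      intro x hx
      rw [interior_Icc] at hx
      have hxmem : x ∈ Icc (R / deriv f B) T := Ioo_subset_Icc_self hx
      have hD : HasDerivAt y (lamF f (finv ((y x + R) / x)) Bbar) x :=
        (hyD x hxmem).hasDerivAt (Icc_mem_nhds hx.1 hx.2)
      rw [hD.deriv]
      have h1 := hlamanti ht₀mem hxmem hx.1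
      simp only at h1
      rwa [hlamt₀] at h1
    have hy_le : ∀ t ∈ Icc (R / deriv f B) T, y t ≤ 0 := by
      intro t ht
      rcases eq_or_lt_of_le ht.1 with h | h
      · rw [← h, hy0]
      · have h1 := hyanti ht₀mem ht h
        rw [hy0] at h1
        exact h1.le
    have hy_lt : ∀ t ∈ Ioc (R / deriv f B) T, y t < 0 := by
      intro t ht
      have h1 := hyanti ht₀mem ⟨ht.1.le, ht.2⟩ ht.1
      rwa [hy0] at h1
    have hgmono : StrictMonoOn (fun t => y t - t * deriv f Bbar) (Icc (R / deriv f B) T) := by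
      apply strictMonoOn_of_deriv_pos (convex_Icc _ _)
      · exact hycont.sub ((continuous_id.mul continuous_const).continuousOn)
      · intro x hx
        rw [interior_Icc] at hx
        have hxmem : x ∈ Icc (R / deriv f B) T := Ioo_subset_Icc_self hx
        have hD : HasDerivAt (fun t => y t - t * deriv f Bbar)
            (lamF f (finv ((y x + R) / x)) Bbar - 1 * deriv f Bbar) x :=
          ((hyD x hxmem).hasDerivAt (Icc_mem_nhds hx.1 hx.2)).sub
            ((hasDerivAt_id x).mul_const _)
        rw [hD.deriv]
        have h1 : deriv f Bbar < lamF f (finv ((y x + R) / x)) Bbar := by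
          rw [hlamgen]
          exact hL1 _ (hvgt x hxmem)
        linarith
    have hTfB : T * deriv f Bbar < 0 := mul_neg_of_pos_of_neg hT hfBbar
    have hylb : ∀ t ∈ Icc (R / deriv f B) T, T * deriv f Bbar < y t := by
      intro t ht
      rcases eq_or_lt_of_le ht.1 with h | h
      · rw [← h, hy0]
        exact hTfB
      · have hg := hgmono ht₀mem ht h
        simp only at hg
        rw [hy0, zero_sub] at hg
        have h2 : T * deriv f Bbar ≤ t * deriv f Bbar :=
          mul_le_mul_of_nonpos_right ht.2 hfBbar.le
        have h3 : 0 < -((R / deriv f B) * deriv f Bbar) := by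
          rw [neg_pos]
          exact mul_neg_of_pos_of_neg ht₀pos hfBbar
        linarith
    exact ⟨hc1, hvgt, fun t ht => ⟨hylb t ht, hy_le t ht⟩, hy_lt, hlamle, hlamanti,
      ⟨hylb T ⟨ht₀T.le, le_rfl⟩, hy_lt T ⟨ht₀T, le_rfl⟩⟩⟩
  -- ## existence
  have hexist : LeftShockSol f finv T B Bbar R (fun t => t * Q (c / t) - R) := by
    constructor
    · show (R / deriv f B) * Q (c / (R / deriv f B)) - R = 0
      have h1 : c / (R / deriv f B) = ψ (deriv f B) := by rw [hψB, hct₀]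
      rw [h1, hQψ _ (hmono hBbarB).le, div_mul_cancel₀ _ hfB.ne', sub_self]
    · intro t ht
      have ht0 : (0:ℝ) < t := hIcc t ht
      have hct : 0 < c / t := div_pos hcpos ht0
      have hp1 : deriv f Bbar < Q (c / t) := hQpos _ hct
      have hψp : ψ (Q (c / t)) = c / t := hψQ _ hct
      have hv1 : Bbar < finv (Q (c / t)) := by
        have h2 := hfinvmono hp1
        rwa [hfinvBbar] at h2
      have h1 : HasDerivAt (fun u : ℝ => c / u) (c * -(t ^ 2)⁻¹) t := by
        have h2 := (hasDerivAt_inv ht0.ne').const_mul c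
        simpa [div_eq_mul_inv] using h2
      have h2 := (hQD (c / t) hct).comp t h1
      have h3 := ((hasDerivAt_id t).mul h2).sub_const R
      have harg : (t * Q (c / t) - R + R) / t = Q (c / t) := by
        rw [sub_add_cancel, mul_comm, mul_div_assoc, div_self ht0.ne', mul_one]
      have hcc : c / t = (finv (Q (c / t)) - Bbar) * Q (c / t)
          - (f (finv (Q (c / t))) - f Bbar) := by
        have h4 := hψval (Q (c / t))
        rw [hψp] at h4
        exact h4
      have hc2 : c = ((finv (Q (c / t)) - Bbar) * Q (c / t)
          - (f (finv (Q (c / t))) - f Bbar)) * t := (div_eq_iff ht0.ne').mp hcc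
      have hval : 1 * Q (c / t) + t * ((finv (Q (c / t)) - Bbar)⁻¹ * (c * -(t ^ 2)⁻¹))
          = lamF f (finv (Q (c / t))) Bbar := by
        rw [hlamgen, eq_div_iff (sub_ne_zero.mpr hv1.ne')]
        have e2 : (finv (Q (c / t)) - Bbar)⁻¹ * (finv (Q (c / t)) - Bbar) = 1 :=
          inv_mul_cancel₀ (sub_ne_zero.mpr hv1.ne')
        have e1 : (1 * Q (c / t) + t * ((finv (Q (c / t)) - Bbar)⁻¹ * (c * -(t ^ 2)⁻¹)))
              * (finv (Q (c / t)) - Bbar)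
            = Q (c / t) * (finv (Q (c / t)) - Bbar)
              - (c / t) * ((finv (Q (c / t)) - Bbar)⁻¹ * (finv (Q (c / t)) - Bbar)) := by
          have hti : t * t⁻¹ = 1 := mul_inv_cancel₀ ht0.ne'
          linear_combination
            (c * t⁻¹ * (Bbar - finv (Q (c / t))) * (finv (Q (c / t)) - Bbar)⁻¹) * hti
        rw [e1, e2, mul_one]
        linear_combination (-1 : ℝ) * hcc
      show HasDerivWithinAt (fun u => u * Q (c / u) - R)
        (lamF f (finv ((t * Q (c / t) - R + R) / t)) Bbar) (Icc (R / deriv f B) T) t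
      rw [harg, ← hval]
      exact h3.hasDerivWithinAt
  -- ## uniqueness
  have huniq : ∀ y₁ y₂ : ℝ → ℝ, LeftShockSol f finv T B Bbar R y₁ →
      LeftShockSol f finv T B Bbar R y₂ → EqOn y₁ y₂ (Icc (R / deriv f B) T) := by
    intro y₁ y₂ h1 h2 t ht
    have k1 := key y₁ h1 t ht
    have k2 := key y₂ h2 t ht
    have ht0 : (0:ℝ) < t := hIcc t ht
    have heq : (y₁ t + R) / t = (y₂ t + R) / t := by
      have e : ψ ((y₁ t + R) / t) = ψ ((y₂ t + R) / t) := by rw [k1.2, k2.2]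
      exact hψmono.injOn (mem_Ici.mpr k1.1.le) (mem_Ici.mpr k2.1.le) e
    rw [div_eq_div_iff ht0.ne' ht0.ne'] at heq
    have := mul_right_cancel₀ ht0.ne' heq
    show y₁ t = y₂ t
    linarith
  exact ⟨⟨ht₀pos, ht₀T⟩,
    ⟨(fun t => t * Q (c / t) - R), hexist, fun y' hy' => huniq y' _ hy' hexist⟩, props⟩

end
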